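/- Let S, T ∈ B(H) with S and T norm-attainable, say ‖Sζ‖ = ‖S‖ and ‖Tη‖ = ‖T‖ for unit vectors ζ, η. Then the basic elementary operator M_{S,T}(X) = SXT is norm-attainable on B(H): there exists X ∈ B(H) with ‖X‖ = 1 and ‖SXT‖ = ‖S‖·‖T‖. -/

import Mathlib

theorem basic_elementary_operator_norm_attainable
    {H : Type*} [NormedAddCommGroup H] [InnerProductSpace ℂ H] [CompleteSpace H]
    (S T : H →L[ℂ] H) (ζ η : H) (hζ : ‖ζ‖ = 1) (hη : ‖η‖ = 1)
    (hS : ‖S ζ‖ = ‖S‖) (hT : ‖T η‖ = ‖T‖) :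
    ∃ X : H →L[ℂ] H, ‖X‖ = 1 ∧ ‖S * X * T‖ = ‖S‖ * ‖T‖ := by
  have hnt : Nontrivial H := by
    refine ⟨ζ, 0, fun h => ?_⟩
    rw [h, norm_zero] at hζ; exact one_ne_zero hζ.symm
  by_cases hT0 : T η = 0
  · have hTn : ‖T‖ = 0 := by rw [← hT, hT0, norm_zero]
    refine ⟨1, ?_, ?_⟩
    · exact norm_one
    · have : T = 0 := by
        rwa [norm_eq_zero] at hTn
      rw [this]
      simp [hTn]
  · set u : H := ((‖T η‖⁻¹ : ℝ) : ℂ) • T η with hu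
    have hunorm : ‖u‖ = 1 := by
      rw [hu, norm_smul, Complex.norm_real, norm_inv, norm_norm]
      field_simp [norm_ne_zero_iff.mpr hT0]
    set X : H →L[ℂ] H := (innerSL ℂ u).smulRight ζ with hX
    have hXnorm : ‖X‖ = 1 := by
      rw [hX, ContinuousLinearMap.norm_smulRight_apply, innerSL_apply_norm, hunorm, hζ,
        one_mul]
    have hXTη : X (T η) = (‖T η‖ : ℂ) • ζ := by
      rw [hX]
      simp only [ContinuousLinearMap.smulRight_apply, innerSL_apply_apply, hu]
      rw [inner_smul_left, inner_self_eq_norm_sq_to_K]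
      push_cast [pow_two, ← mul_assoc]
      rw [map_inv₀, Complex.conj_ofReal]
      have hne : (‖T η‖ : ℂ) ≠ 0 := by exact_mod_cast norm_ne_zero_iff.mpr hT0
      congr 1
      field_simp
      rfl
    have key : ‖(S * X * T) η‖ = ‖S‖ * ‖T‖ := by
      have : (S * X * T) η = (‖T η‖ : ℂ) • S ζ := by
        simp only [ContinuousLinearMap.mul_apply, hXTη, map_smul]
      rw [this, norm_smul, Complex.norm_real, norm_norm, hT, hS, mul_comm]
    refine ⟨X, hXnorm, le_antisymm ?_ ?_⟩
    · calc ‖S * X * T‖ ≤ ‖S * X‖ * ‖T‖ := norm_mul_le _ _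
        _ ≤ ‖S‖ * ‖X‖ * ‖T‖ := by
            gcongr; exact norm_mul_le _ _
        _ = ‖S‖ * ‖T‖ := by rw [hXnorm, mul_one]
    · calc ‖S‖ * ‖T‖ = ‖(S * X * T) η‖ := key.symm
        _ ≤ ‖S * X * T‖ * ‖η‖ := ContinuousLinearMap.le_opNorm _ _
        _ = ‖S * X * T‖ := by rw [hη, mul_one]
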